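/- arXiv:1307.7455 — 3 statements merged into one kernel-verified Lean document; each statement's English description precedes it below -/
import Mathlib

section
/- Let G be a finite group of order v with a bijection θ : G → G fixing the identity such that both θ and x ↦ x⁻¹θ(x) are bijections, and such that every cycle of θ on G \ {1} has length k. Define blocks B_g = {(g·g_{i1}, ..., g·g_{ik}) : i = 1,...,r} for g ∈ G, where (g_{i1},...,g_{ik}) are the cycles of θ. Then every ordered pair (x,y) of distinct elements of G occurs as a consecutive pair (i.e., y = g·θ(g⁻¹x) for the block through x) in exactly one block of ⋃_{g∈G} B_g. -/
theorem stmt_6 (G : Type*) [Group G] [Finite G] (k : ℕ) (hk : 2 ≤ k)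
    (θ : G → G) (hbij : Function.Bijective θ) (hcan : θ 1 = 1)
    (hortho : Function.Bijective (fun x : G => x⁻¹ * θ x))
    (hreg : ∀ x : G, x ≠ 1 → Set.ncard {y : G | ∃ j : ℕ, θ^[j] x = y} = k) :
    ∀ x y : G, x ≠ y →
      ∃! p : G × G, p.2 ≠ 1 ∧ x = p.1 * p.2 ∧ y = p.1 * θ p.2 := by
  intro x y hxy
  obtain ⟨h, hh⟩ := hortho.surjective (x⁻¹ * y)
  simp only at hh
  have hne : h ≠ 1 := by
    rintro rfl
    simp [hcan] at hh
    exact hxy (inv_mul_eq_one.mp hh.symm)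
  refine ⟨(x * h⁻¹, h), ⟨hne, by group, ?_⟩, ?_⟩
  · have : y = x * (h⁻¹ * θ h) := by rw [hh]; group
    rw [this]; group
  · rintro ⟨g, h'⟩ ⟨h'ne, hx, hy⟩
    simp only at hx hy ⊢
    have : h'⁻¹ * θ h' = x⁻¹ * y := by rw [hx, hy]; group
    have heq : h' = h := hortho.injective (by simp [this, hh])
    subst heq
    subst hx; simp
end

section
/- Let v ≥ 7 be an integer all of whose prime factors are congruent to 1 modulo 6, and let a be a solution of x² − x + 1 ≡ 0 (mod v). Then [a] ∈ ℤ_v* has multiplicative order 6 and a^i − 1 is coprime to v for all 1 ≤ i ≤ 5. -/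
theorem stmt_14 (v : ℕ) (hv : 7 ≤ v)
    (hp : ∀ p : ℕ, p.Prime → p ∣ v → p % 6 = 1)
    (a : ZMod v) (ha : a ^ 2 - a + 1 = 0) :
    orderOf a = 6 ∧ (∀ i : ℕ, 1 ≤ i → i ≤ 5 → IsUnit (a ^ i - 1)) := by
  haveI : NeZero v := ⟨by omega⟩
  haveI : Fact (1 < v) := ⟨by omega⟩
  -- 2 and 3 are units mod v
  have hc2 : Nat.Coprime 2 v := by
    rw [Nat.Prime.coprime_iff_not_dvd Nat.prime_two]
    intro h
    have := hp 2 Nat.prime_two h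
    omega
  have hc3 : Nat.Coprime 3 v := by
    rw [Nat.Prime.coprime_iff_not_dvd Nat.prime_three]
    intro h
    have := hp 3 Nat.prime_three h
    omega
  have h2 : IsUnit (2 : ZMod v) := by
    have := (ZMod.isUnit_iff_coprime 2 v).2 hc2
    simpa using this
  have h3 : IsUnit (3 : ZMod v) := by
    have := (ZMod.isUnit_iff_coprime 3 v).2 hc3
    simpa using this
  have h2ne : (2 : ZMod v) ≠ 0 := fun h => by simp [h] at h2
  have h3ne : (3 : ZMod v) ≠ 0 := fun h => by simp [h] at h3
  have h6 : a ^ 6 = 1 := by linear_combination (a^4 + a^3 - a - 1) * ha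
  have haU : IsUnit a := IsUnit.of_mul_eq_one (a := a) (a ^ 5) (by
    rw [← pow_succ']; exact h6)
  have hsum : IsUnit ((a + 1) * (a - 2)) := by
    have : (a + 1) * (a - 2) = -3 := by linear_combination ha
    rw [this]; exact h3.neg
  have hap1 : IsUnit (a + 1) := isUnit_of_mul_isUnit_left hsum
  have ham2 : IsUnit (a - 2) := isUnit_of_mul_isUnit_right hsum
  constructor
  · have hdvd : orderOf a ∣ 6 := orderOf_dvd_of_pow_eq_one h6
    have h1 : a ≠ 1 := by
      intro h; rw [h] at ha; simp at ha
    have hne2 : a ^ 2 ≠ 1 := by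
      intro h
      have : (3 : ZMod v) = 0 := by linear_combination (a + 2) * ha - (a + 1) * h
      exact h3ne this
    have hne3 : a ^ 3 ≠ 1 := by
      intro h
      have : (2 : ZMod v) = 0 := by linear_combination (a + 1) * ha - h
      exact h2ne this
    have hle : orderOf a ≤ 6 := Nat.le_of_dvd (by norm_num) hdvd
    interval_cases h : orderOf a
    · exact absurd hdvd (by decide)
    · exact absurd (orderOf_eq_one_iff.mp h) h1
    · exact absurd (h ▸ pow_orderOf_eq_one a) hne2
    · exact absurd (h ▸ pow_orderOf_eq_one a) hne3
    · exact absurd hdvd (by decide)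
    · exact absurd hdvd (by decide)
    · rfl
  · intro i hi1 hi5
    interval_cases i
    · have : a ^ 1 - 1 = a * a := by linear_combination -ha
      rw [this]; exact haU.mul haU
    · have : a ^ 2 - 1 = a - 2 := by linear_combination ha
      rw [this]; exact ham2
    · have : a ^ 3 - 1 = -2 := by linear_combination (a + 1) * ha
      rw [this]; exact h2.neg
    · have : a ^ 4 - 1 = -(a + 1) := by linear_combination (a^2 + a) * ha
      rw [this]; exact hap1.neg
    · have : a ^ 5 - 1 = -a := by linear_combination (a^3 + a^2 - 1) * ha
      rw [this]; exact haU.neg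
end

section
/- Let K be a finite group of order v admitting a fixed-point-free automorphism φ of prime order k. Then k divides v − 1, and the set of blocks {(gx, gφ(x), gφ²(x), ..., gφ^{k−1}(x)) : g ∈ K, x a representative of a ⟨φ⟩-orbit on K \ {1}} has the property that for every t with 1 ≤ t ≤ k−1, every ordered pair (u, w) of distinct elements of K appears t-apart in exactly one block (i.e., there are unique g, x, j with u = gφ^j(x) and w = gφ^{j+t}(x)). -/
theorem stmt_19 (K : Type*) [Group K] [Finite K] (φ : MulAut K) (k : ℕ)
    (hkp : k.Prime) (hord : orderOf φ = k)
    (hfpf : ∀ x : K, φ x = x → x = 1) :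
    k ∣ Nat.card K - 1 ∧
    ∀ t : ℕ, 1 ≤ t → t ≤ k - 1 → ∀ u w : K, u ≠ w →
      ∃! p : K × K, p.2 ≠ 1 ∧ u = p.1 * p.2 ∧ w = p.1 * (φ ^ t) p.2 := by
  haveI : Fact k.Prime := ⟨hkp⟩
  constructor
  · -- k ∣ Nat.card K - 1
    set G := Subgroup.zpowers φ with hG
    have hpg : IsPGroup k G := IsPGroup.of_card (by
      rw [Nat.card_zpowers, hord, pow_one])
    have hmod := hpg.card_modEq_card_fixedPoints K
    have hfix : Nat.card (MulAction.fixedPoints G K) = 1 := by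
      rw [Nat.card_eq_one_iff_unique]
      refine ⟨⟨fun x y => ?_⟩, ⟨⟨1, fun g => map_one g.1⟩⟩⟩
      have hx1 : (x : K) = 1 := hfpf x (x.2 ⟨φ, Subgroup.mem_zpowers φ⟩)
      have hy1 : (y : K) = 1 := hfpf y (y.2 ⟨φ, Subgroup.mem_zpowers φ⟩)
      exact Subtype.ext (hx1.trans hy1.symm)
    rw [hfix] at hmod
    have h1 : 1 ≤ Nat.card K := Nat.card_pos
    exact (Nat.modEq_iff_dvd' h1).mp hmod.symm
  · intro t ht1 ht2 u w huw
    -- φ ^ t is fixed-point-free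
    have htk : t < k := lt_of_le_of_lt ht2 (Nat.sub_lt hkp.pos one_pos)
    have hcop : Nat.Coprime t k :=
      Nat.Coprime.symm ((Nat.Prime.coprime_iff_not_dvd hkp).mpr
        (fun h => Nat.not_lt.mpr (Nat.le_of_dvd ht1 h) htk))
    obtain ⟨a, -, ha⟩ := Nat.exists_mul_mod_eq_one_of_coprime hcop hkp.one_lt
    have hfpf' : ∀ x : K, (φ ^ t) x = x → x = 1 := by
      intro x hx
      have key : ∀ n : ℕ, ((φ ^ t) ^ n) x = x := by
        intro n
        induction n with
        | zero => simp
        | succ n ih => rw [pow_succ, MulAut.mul_apply, hx, ih]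
      have h2 : (φ ^ (t * a)) x = x := by rw [pow_mul]; exact key a
      have h3 : φ ^ (t * a) = φ := by
        rw [← pow_mod_orderOf, hord, ha, pow_one]
      exact hfpf x (h3 ▸ h2)
    -- the map x ↦ x⁻¹ * (φ^t) x is injective, hence surjective
    have hinj : Function.Injective (fun x : K => x⁻¹ * (φ ^ t) x) := by
      intro x y hxy
      simp only at hxy
      have hfy : (φ ^ t) y = y * (x⁻¹ * (φ ^ t) x) := by rw [hxy]; group
      have hthis : (φ ^ t) (y * x⁻¹) = y * x⁻¹ := by
        rw [map_mul, map_inv, hfy]; group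
      have h0 : y * x⁻¹ = 1 := hfpf' _ hthis
      have := mul_inv_eq_one.mp h0
      exact this.symm
    have hsurj := Finite.surjective_of_injective hinj
    obtain ⟨x, hx⟩ := hsurj (u⁻¹ * w)
    simp only at hx
    have hxne : x ≠ 1 := by
      intro h
      rw [h] at hx
      simp only [inv_one, one_mul, map_one] at hx
      exact huw (inv_mul_eq_one.mp hx.symm)
    refine ⟨(u * x⁻¹, x), ⟨hxne, by group, ?_⟩, ?_⟩
    · show w = u * x⁻¹ * (φ ^ t) x
      rw [mul_assoc, hx]; group
    · rintro ⟨g, y⟩ ⟨hy1, hu, hw⟩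
      simp only at hu hw ⊢
      have hxy : y⁻¹ * (φ ^ t) y = x⁻¹ * (φ ^ t) x := by
        rw [hx, hu, hw]; group
      have hyx : y = x := hinj hxy
      subst hyx
      have : g = u * y⁻¹ := by rw [hu]; group
      rw [this]
end
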